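/- Let 𝓗 be a complex inner product space, let ψ ∈ 𝓗 be a unit vector, let K be a natural number, and let H_b : 𝓗 →ₗ[ℂ] 𝓗 (b : Fin K) be symmetric linear operators. Then Var_ψ(∑_b H_b) ≤ (∑_b √(Var_ψ(H_b)))². -/

import Mathlib

open Finset

/-- The quantum variance of an observable `O` in the state `ψ`:
`Var_ψ(O) = ‖O ψ‖² − (re⟪ψ, O ψ⟫)²`. -/
noncomputable def qVar {𝓗 : Type*} [NormedAddCommGroup 𝓗] [InnerProductSpace ℂ 𝓗]
    (ψ : 𝓗) (O : 𝓗 →ₗ[ℂ] 𝓗) : ℝ :=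
  ‖O ψ‖ ^ 2 - ((inner ℂ ψ (O ψ) : ℂ).re) ^ 2

lemma qVar_eq_norm_sq {𝓗 : Type*} [NormedAddCommGroup 𝓗] [InnerProductSpace ℂ 𝓗]
    (ψ : 𝓗) (hψ : ‖ψ‖ = 1) (O : 𝓗 →ₗ[ℂ] 𝓗) :
    qVar ψ O = ‖O ψ - (((inner ℂ ψ (O ψ) : ℂ).re : ℂ)) • ψ‖ ^ 2 := by
  set c : ℝ := (inner ℂ ψ (O ψ) : ℂ).re with hc
  have h := @norm_sub_sq ℂ 𝓗 _ _ _ (O ψ) ((c : ℂ) • ψ)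
  rw [h]
  have h1 : (inner ℂ (O ψ) ((c:ℂ) • ψ) : ℂ) = (c:ℂ) * inner ℂ (O ψ) ψ := inner_smul_right _ _ _
  have h2 : ((inner ℂ (O ψ) ψ : ℂ)).re = c := by
    rw [hc, ← inner_conj_symm ψ (O ψ), Complex.conj_re]
  have h3 : ‖(c:ℂ) • ψ‖ = |c| := by
    rw [norm_smul, hψ]
    simp
  rw [h1, h3]
  have : ((c:ℂ) * inner ℂ (O ψ) ψ).re = c * c := by
    rw [Complex.mul_re]
    simp [h2, ← inner_conj_symm ψ (O ψ)]
  simp only [RCLike.re_to_complex]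
  rw [this]
  simp [qVar, sq_abs]
  ring

/-- Partitioning an observable can only increase the shot-noise cost:
`Var_ψ(∑ b, H b) ≤ (∑ b, √(Var_ψ(H b)))²`. -/
theorem stmt1 {𝓗 : Type*} [NormedAddCommGroup 𝓗] [InnerProductSpace ℂ 𝓗]
    (ψ : 𝓗) (hψ : ‖ψ‖ = 1) (K : ℕ) (H : Fin K → (𝓗 →ₗ[ℂ] 𝓗))
    (hH : ∀ b, (H b).IsSymmetric) :
    qVar ψ (∑ b, H b) ≤ (∑ b, Real.sqrt (qVar ψ (H b))) ^ 2 := by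
  set v : Fin K → 𝓗 := fun b => H b ψ - (((inner ℂ ψ (H b ψ) : ℂ).re : ℂ)) • ψ with hv
  have hvar : ∀ b, Real.sqrt (qVar ψ (H b)) = ‖v b‖ := by
    intro b
    rw [qVar_eq_norm_sq ψ hψ, Real.sqrt_sq_eq_abs, abs_norm]
  have hsum : qVar ψ (∑ b, H b) = ‖∑ b, v b‖ ^ 2 := by
    rw [qVar_eq_norm_sq ψ hψ]
    congr 1
    have happ : (∑ b, H b) ψ = ∑ b, H b ψ := by
      simp [LinearMap.sum_apply]
    rw [happ]
    have hinner : (inner ℂ ψ (∑ b, H b ψ) : ℂ) = ∑ b, (inner ℂ ψ (H b ψ) : ℂ) :=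
      inner_sum _ _ _
    rw [hinner]
    rw [Complex.re_sum]
    push_cast
    rw [Finset.sum_smul]
    rw [← Finset.sum_sub_distrib]
  rw [hsum]
  calc ‖∑ b, v b‖ ^ 2 ≤ (∑ b, ‖v b‖) ^ 2 := by
        apply pow_le_pow_left₀ (norm_nonneg _)
        exact norm_sum_le _ _
    _ = (∑ b, Real.sqrt (qVar ψ (H b))) ^ 2 := by
        simp_rw [hvar]
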